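/- arXiv:1403.3226 — 3 statements merged into one kernel-verified Lean document; each statement's English description precedes it below -/
import Mathlib

section
/- Let k be a real closed field with algebraic closure k̄ = k(i), and let A be the 2n×2n block-diagonal matrix over k̄ with n diagonal blocks equal to [[0,1],[-1,0]]. If M is an invertible 2n×2n matrix over k̄ satisfying M = A·conj(M)·A⁻¹ (where conj applies the nontrivial k-automorphism of k̄ entrywise), then det(M) is a positive element of k. -/
open Polynomial Matrix

/-- A (linearly ordered) field is real closed if every nonnegative element is a square and
every polynomial of odd degree has a root. -/
def IsRealClosed' (k : Type*) [Field k] [LinearOrder k] [IsStrictOrderedRing k] : Prop :=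
  (∀ x : k, 0 ≤ x → ∃ y, y ^ 2 = x) ∧
  ∀ p : Polynomial k, Odd p.natDegree → ∃ x, p.eval x = 0

/-- The algebraic closure k̄ = k(i) of a real closed field `k`. -/
noncomputable abbrev Kbar (k : Type*) [Field k] [LinearOrder k] [IsStrictOrderedRing k] : Type _ :=
  AdjoinRoot (X ^ 2 + 1 : k[X])

/-- The nontrivial `k`-automorphism (conjugation) of `k(i)`, sending `i ↦ -i`. -/
noncomputable def Kbar.conj (k : Type*) [Field k] [LinearOrder k] [IsStrictOrderedRing k] : Kbar k →+* Kbar k :=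
  AdjoinRoot.lift (algebraMap k (Kbar k)) (-(AdjoinRoot.root _)) (by
    have h := AdjoinRoot.eval₂_root (X ^ 2 + 1 : k[X])
    rw [AdjoinRoot.algebraMap_eq]
    simp only [eval₂_add, eval₂_pow, eval₂_X, eval₂_one, neg_sq] at h ⊢
    exact h)

/-- `I_p = diag(1,…,1,-1,…,-1)` with `p` ones. -/
def Ip (R : Type*) [Ring R] (n p : ℕ) : Matrix (Fin n) (Fin n) R :=
  Matrix.diagonal fun j => if (j : ℕ) < p then 1 else -1

/-- `J_p = diag(1,…,1,i,…,i)` with `p` ones. -/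
noncomputable def Jp (k : Type*) [Field k] [LinearOrder k] [IsStrictOrderedRing k] (n p : ℕ) :
    Matrix (Fin n) (Fin n) (Kbar k) :=
  Matrix.diagonal fun j => if (j : ℕ) < p then 1 else AdjoinRoot.root _

/-- The block-diagonal matrix with 2×2 blocks [[0,1],[-1,0]] (0-indexed version of `A_n`). -/
def An (R : Type*) [Ring R] (n : ℕ) : Matrix (Fin n) (Fin n) R :=
  Matrix.of fun i j =>
    if (i : ℕ) % 2 = 0 ∧ (j : ℕ) = (i : ℕ) + 1 then 1
    else if (i : ℕ) % 2 = 1 ∧ (j : ℕ) + 1 = (i : ℕ) then -1 else 0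

/-- The standard embedding `μ : H → M₂(k̄)`,
`a + bI + cJ + dK ↦ [[a+bi, c+di],[-c+di, a-bi]]`. -/
noncomputable def mu (k : Type*) [Field k] [LinearOrder k] [IsStrictOrderedRing k] (h : Quaternion k) :
    Matrix (Fin 2) (Fin 2) (Kbar k) :=
  !![algebraMap k (Kbar k) h.re + algebraMap k (Kbar k) h.imI * AdjoinRoot.root _,
     algebraMap k (Kbar k) h.imJ + algebraMap k (Kbar k) h.imK * AdjoinRoot.root _;
     -algebraMap k (Kbar k) h.imJ + algebraMap k (Kbar k) h.imK * AdjoinRoot.root _,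
     algebraMap k (Kbar k) h.re - algebraMap k (Kbar k) h.imI * AdjoinRoot.root _]

section
variable (k : Type*) [Field k] [LinearOrder k] [IsStrictOrderedRing k]
open scoped Quaternion

local notation "ρ" => AdjoinRoot.root (X ^ 2 + 1 : k[X])
local notation "am" => algebraMap k (Kbar k)

theorem Kbar.root_mul_root : ρ * ρ = -1 := by
  have h := AdjoinRoot.eval₂_root (X ^ 2 + 1 : k[X])
  simp only [eval₂_add, eval₂_pow, eval₂_X, eval₂_one, sq, eval₂_mul] at h
  linear_combination h

theorem Kbar.conj_algebraMap (x : k) : Kbar.conj k (am x) = am x := by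
  rw [AdjoinRoot.algebraMap_eq]
  exact AdjoinRoot.lift_of _

theorem Kbar.conj_root : Kbar.conj k ρ = -ρ := by
  rw [Kbar.conj, AdjoinRoot.lift_root]

theorem Kbar.repr (a : Kbar k) : ∃ x y : k, a = am x + am y * ρ := by
  obtain ⟨p, rfl⟩ := AdjoinRoot.mk_surjective a
  have hm : (X ^ 2 + 1 : k[X]).Monic := by monicity!
  refine ⟨(p %ₘ (X ^ 2 + 1)).coeff 0, (p %ₘ (X ^ 2 + 1)).coeff 1, ?_⟩
  have h1 : AdjoinRoot.mk (X ^ 2 + 1 : k[X]) p = AdjoinRoot.mk (X ^ 2 + 1 : k[X]) (p %ₘ (X ^ 2 + 1)) := by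
    conv_lhs => rw [← modByMonic_add_div p (X ^ 2 + 1)]
    rw [map_add, _root_.map_mul, AdjoinRoot.mk_self, zero_mul, add_zero]
  have h2 : degree (p %ₘ (X ^ 2 + 1)) ≤ 1 := by
    have := degree_modByMonic_lt p hm
    rw [show degree (X ^ 2 + 1 : k[X]) = 2 by
      compute_degree!] at this
    exact Order.le_of_lt_succ (by exact_mod_cast this)
  rw [h1]
  conv_lhs => rw [eq_X_add_C_of_degree_le_one h2]
  rw [map_add, _root_.map_mul, AdjoinRoot.mk_X, AdjoinRoot.mk_C, AdjoinRoot.mk_C,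
    AdjoinRoot.algebraMap_eq]
  show _ = AdjoinRoot.of _ _ + AdjoinRoot.of _ _ * _
  ring

theorem Kbar.indep {x y : k} (h : am x + am y * ρ = 0) : x = 0 ∧ y = 0 := by
  have hm : (X ^ 2 + 1 : k[X]).Monic := by monicity!
  have h1 : AdjoinRoot.mk (X ^ 2 + 1 : k[X]) (C x + C y * X) = 0 := by
    rw [map_add, _root_.map_mul, AdjoinRoot.mk_X, AdjoinRoot.mk_C, AdjoinRoot.mk_C]
    rw [AdjoinRoot.algebraMap_eq] at h
    exact h
  rw [AdjoinRoot.mk_eq_zero] at h1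
  have h2 : (C x + C y * X : k[X]) = 0 := by
    refine eq_zero_of_dvd_of_degree_lt h1 ?_
    rw [show degree (X ^ 2 + 1 : k[X]) = 2 by
      compute_degree!]
    calc degree (C x + C y * X) ≤ 1 := by
          refine (degree_add_le _ _).trans (max_le (degree_C_le.trans (by norm_num)) ?_)
          exact (degree_mul_le _ _).trans (by simpa using add_le_add degree_C_le le_rfl)
      _ < 2 := by norm_num
  constructor
  · have := congrArg (fun p => Polynomial.coeff p 0) h2; simpa using this
  · have := congrArg (fun p => Polynomial.coeff p 1) h2; simpa using this


/-- `mu` as a ring homomorphism. -/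
noncomputable def muR : Quaternion k →+* Matrix (Fin 2) (Fin 2) (Kbar k) where
  toFun := mu k
  map_one' := by
    ext r r'
    fin_cases r <;> fin_cases r' <;>
      simp [mu, Quaternion.re_one, Quaternion.imI_one, Quaternion.imJ_one, Quaternion.imK_one,
        Matrix.one_apply]
  map_mul' x y := by
    have hr := Kbar.root_mul_root k
    rw [← pow_two] at hr
    ext r r'
    fin_cases r <;> fin_cases r' <;>
      · simp only [mu, Quaternion.re_mul, Quaternion.imI_mul, Quaternion.imJ_mul,
          Quaternion.imK_mul, map_add, map_sub, _root_.map_mul, map_neg,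
          Matrix.cons_val', Matrix.cons_val_zero, Matrix.cons_val_one, Matrix.head_cons,
          Matrix.head_fin_const, Matrix.mul_apply, Fin.sum_univ_two, Matrix.cons_val_fin_one,
          Matrix.of_apply, Fin.isValue, Fin.zero_eta, Fin.mk_one]
        ring_nf
        simp only [hr]
        ring
  map_zero' := by
    ext r r'
    fin_cases r <;> fin_cases r' <;> simp [mu]
  map_add' x y := by
    ext r r'
    fin_cases r <;> fin_cases r' <;>
      · simp [mu, Quaternion.re_add, Quaternion.imI_add, Quaternion.imJ_add, Quaternion.imK_add,
          map_add]
        ring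

variable {k}

theorem mu_zero : mu k 0 = 0 := map_zero (muR k)

/-- The block-substitution ring homomorphism `Mₙ(H) → M₂ₙ(k̄)`. -/
noncomputable def Phi (ι : Type*) [Fintype ι] [DecidableEq ι] :
    Matrix ι ι (Quaternion k) →+* Matrix (ι × Fin 2) (ι × Fin 2) (Kbar k) :=
  ((Matrix.compRingEquiv ι (Fin 2) (Kbar k)) :
      Matrix ι ι (Matrix (Fin 2) (Fin 2) (Kbar k)) ≃+* _).toRingHom.comp (muR k).mapMatrix

variable {ι κ : Type*} [Fintype ι] [DecidableEq ι] [Fintype κ] [DecidableEq κ]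

theorem Phi_apply (N : Matrix ι ι (Quaternion k)) (a b : ι × Fin 2) :
    Phi ι N a b = mu k (N a.1 b.1) a.2 b.2 := rfl

theorem reindex_mul {α : Type*} [Fintype ι] [Mul α] [AddCommMonoid α] (e : ι ≃ κ)
    (A B : Matrix ι ι α) : reindex e e A * reindex e e B = reindex e e (A * B) :=
  Matrix.submatrix_mul_equiv A B _ _ _

theorem Phi_reindex (e : ι ≃ κ) (N : Matrix ι ι (Quaternion k)) :
    Phi κ (reindex e e N) = reindex (e.prodCongr (Equiv.refl (Fin 2)))
      (e.prodCongr (Equiv.refl (Fin 2))) (Phi ι N) := by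
  ext ⟨a1, a2⟩ ⟨b1, b2⟩
  simp [Phi_apply, Equiv.prodCongr, reindex_apply, submatrix_apply]

theorem det_Phi_reindex (e : ι ≃ κ) (N : Matrix ι ι (Quaternion k)) :
    (Phi κ (reindex e e N)).det = (Phi ι N).det := by
  rw [Phi_reindex, Matrix.det_reindex_self]

theorem det_Phi_one_add_row (q₀ : ι) (N : Matrix ι ι (Quaternion k))
    (hrow : ∀ x y, x ≠ q₀ → N x y = 0) (hdiag : N q₀ q₀ = 0) :
    (Phi ι (1 + N)).det = 1 := by
  rw [map_add, _root_.map_one]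
  set U : Matrix (ι × Fin 2) (Fin 2) (Kbar k) :=
    fun x s => if x = (q₀, s) then 1 else 0 with hU
  set V : Matrix (Fin 2) (ι × Fin 2) (Kbar k) := fun s y => Phi ι N (q₀, s) y with hV
  have hUV : U * V = Phi ι N := by
    ext ⟨x1, x2⟩ y
    by_cases hx : x1 = q₀
    · subst hx
      rw [Matrix.mul_apply]
      simp [Matrix.mul_apply, hU, hV, Prod.mk.injEq, Finset.sum_ite_eq]
    · have h0 : N x1 y.1 = 0 := hrow _ _ hx
      rw [Matrix.mul_apply]
      simp [Matrix.mul_apply, hU, hV, hx, Prod.mk.injEq, Phi_apply, h0, mu_zero]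
  have hVU : V * U = 0 := by
    ext s s'
    have h0 : Phi ι N (q₀, s) (q₀, s') = 0 := by simp [Phi_apply, hdiag, mu_zero]
    rw [Matrix.mul_apply]
    simp [Matrix.mul_apply, hU, hV, Finset.sum_ite_eq', h0]
  rw [← hUV, Matrix.det_one_add_mul_comm, hVU, add_zero, Matrix.det_one]

theorem det_Phi_one_add_col (q₀ : ι) (N : Matrix ι ι (Quaternion k))
    (hcol : ∀ x y, y ≠ q₀ → N x y = 0) (hdiag : N q₀ q₀ = 0) :
    (Phi ι (1 + N)).det = 1 := by
  rw [map_add, _root_.map_one]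
  set U : Matrix (ι × Fin 2) (Fin 2) (Kbar k) := fun x s => Phi ι N x (q₀, s) with hU
  set V : Matrix (Fin 2) (ι × Fin 2) (Kbar k) :=
    fun s y => if y = (q₀, s) then 1 else 0 with hV
  have hUV : U * V = Phi ι N := by
    ext x ⟨y1, y2⟩
    by_cases hy : y1 = q₀
    · subst hy
      rw [Matrix.mul_apply]
      simp [Matrix.mul_apply, hU, hV, Prod.mk.injEq, Finset.sum_ite_eq]
    · have h0 : N x.1 y1 = 0 := hcol _ _ hy
      rw [Matrix.mul_apply]
      simp [Matrix.mul_apply, hU, hV, hy, Prod.mk.injEq, Phi_apply, h0, mu_zero]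
  have hVU : V * U = 0 := by
    ext s s'
    have h0 : Phi ι N (q₀, s) (q₀, s') = 0 := by simp [Phi_apply, hdiag, mu_zero]
    rw [Matrix.mul_apply]
    simp [Matrix.mul_apply, hU, hV, Finset.sum_ite_eq', h0]
  rw [← hUV, Matrix.det_one_add_mul_comm, hVU, add_zero, Matrix.det_one]

theorem det_Phi_fromBlocks (N₁ : Matrix ι ι (Quaternion k)) (N₂ : Matrix κ κ (Quaternion k)) :
    (Phi (ι ⊕ κ) (fromBlocks N₁ 0 0 N₂)).det = (Phi ι N₁).det * (Phi κ N₂).det := by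
  have h : Phi (ι ⊕ κ) (fromBlocks N₁ 0 0 N₂) =
      reindex (Equiv.sumProdDistrib ι κ (Fin 2)).symm (Equiv.sumProdDistrib ι κ (Fin 2)).symm
        (fromBlocks (Phi ι N₁) 0 0 (Phi κ N₂)) := by
    ext ⟨x, r⟩ ⟨y, r'⟩
    cases x <;> cases y <;>
      simp [Phi_apply, Matrix.fromBlocks, Equiv.sumProdDistrib, mu_zero]
  rw [h, Matrix.det_reindex_self, Matrix.det_fromBlocks_zero₂₁]

theorem det_Phi_single (N : Matrix (Fin 1) (Fin 1) (Quaternion k)) :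
    (Phi (Fin 1) N).det = am (Quaternion.normSq (N 0 0)) := by
  have hr := Kbar.root_mul_root k
  let e : (Fin 1 × Fin 2) ≃ Fin 2 :=
    ⟨fun x => x.2, fun r => (0, r), fun ⟨x1, x2⟩ => by
      simp [Subsingleton.elim (0 : Fin 1) x1], fun r => rfl⟩
  have h : Phi (Fin 1) N = reindex e.symm e.symm (mu k (N 0 0)) := by
    ext ⟨a1, a2⟩ ⟨b1, b2⟩
    have ha : a1 = 0 := Subsingleton.elim a1 0
    have hb : b1 = 0 := Subsingleton.elim b1 0
    subst ha hb
    rfl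
  rw [h, Matrix.det_reindex_self, mu, Matrix.det_fin_two_of, Quaternion.normSq_def']
  push_cast
  ring_nf
  rw [← pow_two] at hr
  simp only [hr]
  ring


theorem unit_one_add_of_sq_zero {α : Type*} [Ring α] (b : α) (h : b * b = 0) :
    IsUnit (1 + b) := by
  refine ⟨⟨1 + b, 1 - b, ?_, ?_⟩, rfl⟩
  · have : (1 + b) * (1 - b) = 1 - b * b := by noncomm_ring
    rw [this, h, sub_zero]
  · have : (1 - b) * (1 + b) = 1 - b * b := by noncomm_ring
    rw [this, h, sub_zero]

theorem det_Phi_pos : ∀ (n : ℕ) (N : Matrix (Fin n) (Fin n) (Quaternion k)),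
    IsUnit N → ∃ r : k, 0 < r ∧ am r = (Phi (Fin n) N).det := by
  intro n
  induction n with
  | zero =>
    intro N _
    exact ⟨1, one_pos, by simp [Matrix.det_isEmpty]⟩
  | succ m ih =>
    intro N hN
    -- step 1: a matrix with the same `det ∘ Phi`, still a unit, with nonzero pivot
    obtain ⟨P, hPunit, hPdet, hd⟩ :
        ∃ P : Matrix (Fin (m + 1)) (Fin (m + 1)) (Quaternion k),
          IsUnit P ∧ (Phi _ P).det = (Phi _ N).det ∧ P 0 0 ≠ 0 := by
      by_cases h00 : N 0 0 ≠ 0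
      · exact ⟨N, hN, rfl, h00⟩
      push_neg at h00
      -- find a pivot in the first column
      have hcol : ∃ q, N q 0 ≠ 0 := by
        by_contra hc
        push_neg at hc
        obtain ⟨u, hu⟩ := hN
        have h1 : u.inv * N = 1 := by rw [← hu]; exact u.inv_val
        have h2 : N *ᵥ Pi.single (0 : Fin (m + 1)) (1 : Quaternion k) = 0 := by
          rw [Matrix.mulVec_single]
          funext i
          simp [hc]
        have h3 := congrArg (fun A => A *ᵥ Pi.single (0 : Fin (m + 1)) (1 : Quaternion k)) h1
        simp only [← Matrix.mulVec_mulVec, h2, Matrix.mulVec_zero, Matrix.one_mulVec] at h3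
        have := congrFun h3 0
        simp at this
      obtain ⟨q, hq⟩ := hcol
      have hq0 : q ≠ 0 := by rintro rfl; exact hq h00
      set S : Matrix (Fin (m + 1)) (Fin (m + 1)) (Quaternion k) :=
        fun x y => if x = 0 ∧ y = q then 1 else 0 with hS
      have hSS : S * S = 0 := by
        refine Matrix.ext fun x y => ?_
        rw [Matrix.mul_apply, Matrix.zero_apply]
        apply Finset.sum_eq_zero
        intro z _
        by_cases hz : x = 0 ∧ z = q
        · have : ¬(z = 0 ∧ y = q) := fun h => hq0 (h.1 ▸ hz.2.symm)
          simp [hS, this]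
        · simp [hS, hz]
      refine ⟨(1 + S) * N, (unit_one_add_of_sq_zero S hSS).mul hN, ?_, ?_⟩
      · rw [_root_.map_mul, Matrix.det_mul,
          det_Phi_one_add_row 0 S (fun x y hx => by simp [hS, hx]) (by simp [hS, Ne.symm hq0]),
          one_mul]
      · have : ((1 + S) * N) 0 0 = N 0 0 + N q 0 := by
          rw [Matrix.add_mul, Matrix.one_mul]
          simp only [Matrix.add_apply]
          congr 1
          rw [Matrix.mul_apply]
          rw [Finset.sum_eq_single q]
          · simp [hS]
          · intro z _ hz; simp [hS, hz]
          · intro h; exact absurd (Finset.mem_univ q) h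
        rw [this, h00, zero_add]
        exact hq
    -- step 2: elimination with pivot d := P 0 0
    set d := P 0 0 with hdd
    set B : Matrix (Fin (m + 1)) (Fin (m + 1)) (Quaternion k) :=
      fun x y => if y = 0 ∧ x ≠ 0 then -(P x 0 * d⁻¹) else 0 with hB
    have hBB : B * B = 0 := by
      refine Matrix.ext fun x y => ?_
      rw [Matrix.mul_apply, Matrix.zero_apply]
      apply Finset.sum_eq_zero
      intro z _
      by_cases hz : z = 0 ∧ x ≠ 0
      · have h2 : ¬(y = 0 ∧ z ≠ 0) := fun h => h.2 hz.1
        simp [hB, h2]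
      · simp [hB, hz]
    have hLdet : (Phi (Fin (m + 1)) (1 + B)).det = 1 :=
      det_Phi_one_add_col 0 B (fun x y hy => by simp [hB, hy]) (by simp [hB])
    set G₁ := (1 + B) * P with hG₁
    have hG₁row : ∀ p, G₁ 0 p = P 0 p := by
      intro p
      rw [hG₁, Matrix.add_mul, Matrix.one_mul, Matrix.add_apply]
      have h0 : (B * P) 0 p = 0 := by
        rw [Matrix.mul_apply]; apply Finset.sum_eq_zero; intro z _; simp [hB]
      rw [h0, add_zero]
    have hG₁col : ∀ x, x ≠ 0 → G₁ x 0 = 0 := by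
      intro x hx
      rw [hG₁, Matrix.add_mul, Matrix.one_mul, Matrix.add_apply]
      have h0 : (B * P) x 0 = B x 0 * P 0 0 := by
        rw [Matrix.mul_apply, Finset.sum_eq_single 0]
        · intro z _ hz; simp [hB, hz]
        · intro h; exact absurd (Finset.mem_univ _) h
      rw [h0]
      simp [hB, hx, mul_assoc, ← hdd, inv_mul_cancel₀ hd]
    set C : Matrix (Fin (m + 1)) (Fin (m + 1)) (Quaternion k) :=
      fun x y => if x = 0 ∧ y ≠ 0 then -(d⁻¹ * P 0 y) else 0 with hC
    have hCC : C * C = 0 := by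
      refine Matrix.ext fun x y => ?_
      rw [Matrix.mul_apply, Matrix.zero_apply]
      apply Finset.sum_eq_zero
      intro z _
      by_cases hz : x = 0 ∧ z ≠ 0
      · have h2 : ¬(z = 0 ∧ y ≠ 0) := fun h => hz.2 h.1
        simp [hC, h2]
      · simp [hC, hz]
    have hUdet : (Phi (Fin (m + 1)) (1 + C)).det = 1 :=
      det_Phi_one_add_row 0 C (fun x y hx => by simp [hC, hx]) (by simp [hC])
    set G := G₁ * (1 + C) with hG
    have hG00 : G 0 0 = d := by
      rw [hG, Matrix.mul_add, Matrix.mul_one, Matrix.add_apply]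
      have h0 : (G₁ * C) 0 0 = 0 := by
        rw [Matrix.mul_apply]; apply Finset.sum_eq_zero; intro z _; simp [hC]
      rw [h0, add_zero]; rw [hG₁row 0, hdd]
    have hGcol : ∀ x, x ≠ 0 → G x 0 = 0 := by
      intro x hx
      rw [hG, Matrix.mul_add, Matrix.mul_one, Matrix.add_apply]
      have h0 : (G₁ * C) x 0 = 0 := by
        rw [Matrix.mul_apply]; apply Finset.sum_eq_zero; intro z _; simp [hC]
      rw [h0, add_zero]; exact hG₁col x hx
    have hGrow : ∀ p, p ≠ 0 → G 0 p = 0 := by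
      intro p hp
      rw [hG, Matrix.mul_add, Matrix.mul_one, Matrix.add_apply]
      have h1 : (G₁ * C) 0 p = G₁ 0 0 * C 0 p := by
        rw [Matrix.mul_apply, Finset.sum_eq_single 0]
        · intro z _ hz; simp [hC, hz]
        · intro h; exact absurd (Finset.mem_univ _) h
      rw [h1, hG₁row 0, hG₁row p]
      simp [hC, hp, ← hdd, mul_inv_cancel_left₀ hd]
    have hGunit : IsUnit G :=
      ((unit_one_add_of_sq_zero B hBB).mul hPunit).mul (unit_one_add_of_sq_zero C hCC)
    have hGdet : (Phi (Fin (m + 1)) G).det = (Phi (Fin (m + 1)) N).det := by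
      rw [hG, hG₁, _root_.map_mul, _root_.map_mul, Matrix.det_mul, Matrix.det_mul,
        hLdet, hUdet, hPdet, one_mul, mul_one]
    -- step 3: block decomposition
    let e : (Fin 1 ⊕ Fin m) ≃ Fin (m + 1) := finSumFinEquiv.trans (finCongr (by omega))
    have he0 : ∀ i : Fin 1, e (Sum.inl i) = 0 := by
      intro i
      apply Fin.ext
      simp [e, Fin.fin_one_eq_zero i]
    have heinr : ∀ j : Fin m, e (Sum.inr j) ≠ 0 := by
      intro j h
      have hval := congrArg Fin.val h
      simp [e] at hval
    set Ghat := reindex e.symm e.symm G with hGhatdef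
    have hGhatapp : ∀ a b, Ghat a b = G (e a) (e b) := by
      intro a b
      rw [hGhatdef, reindex_apply, submatrix_apply, Equiv.symm_symm]
    have hGhat : Ghat = fromBlocks Ghat.toBlocks₁₁ 0 0 Ghat.toBlocks₂₂ := by
      refine Matrix.ext fun i j => ?_
      rcases i with i | i <;> rcases j with j | j
      · rw [Matrix.fromBlocks_apply₁₁]; rfl
      · rw [Matrix.fromBlocks_apply₁₂, Matrix.zero_apply, hGhatapp, he0 i]
        exact hGrow _ (heinr j)
      · rw [Matrix.fromBlocks_apply₂₁, Matrix.zero_apply, hGhatapp, he0 j]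
        exact hGcol _ (heinr i)
      · rw [Matrix.fromBlocks_apply₂₂]; rfl
    have hA00 : Ghat.toBlocks₁₁ 0 0 = d := by
      show Ghat (Sum.inl 0) (Sum.inl 0) = d
      rw [hGhatapp, he0]
      exact hG00
    have h1 : (Phi (Fin (m + 1)) G).det = (Phi (Fin 1 ⊕ Fin m) Ghat).det :=
      (det_Phi_reindex e.symm G).symm
    have h2 : (Phi (Fin 1 ⊕ Fin m) Ghat).det =
        (Phi (Fin 1) Ghat.toBlocks₁₁).det * (Phi (Fin m) Ghat.toBlocks₂₂).det := by
      conv_lhs => rw [hGhat]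
      exact det_Phi_fromBlocks _ _
    have h3 : (Phi (Fin 1) Ghat.toBlocks₁₁).det = am (Quaternion.normSq d) := by
      rw [det_Phi_single, hA00]
    -- step 4: the lower-right block is a unit
    obtain ⟨ug, hug⟩ := hGunit
    have hreone : reindex e.symm e.symm (1 : Matrix (Fin (m + 1)) (Fin (m + 1)) (Quaternion k))
        = 1 := Matrix.submatrix_one_equiv e
    have hGhatunit : IsUnit Ghat := by
      refine ⟨⟨Ghat, reindex e.symm e.symm ug.inv, ?_, ?_⟩, rfl⟩
      · rw [hGhatdef, reindex_mul, ← hug, ug.val_inv, hreone]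
      · rw [hGhatdef, reindex_mul, ← hug, ug.inv_val, hreone]
    obtain ⟨v, hv⟩ := hGhatunit
    have hv1 : Ghat * v.inv = 1 := by rw [← hv]; exact v.val_inv
    have hv2 : v.inv * Ghat = 1 := by rw [← hv]; exact v.inv_val
    have hD1 : Ghat.toBlocks₂₂ * (v.inv).toBlocks₂₂ = 1 := by
      have hh := congrArg Matrix.toBlocks₂₂ hv1
      rw [hGhat, ← fromBlocks_toBlocks v.inv, fromBlocks_multiply, ← fromBlocks_one] at hh
      simp only [Matrix.toBlocks_fromBlocks₂₂, Matrix.zero_mul, Matrix.mul_zero, zero_add,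
        add_zero] at hh
      exact hh
    have hD2 : (v.inv).toBlocks₂₂ * Ghat.toBlocks₂₂ = 1 := by
      have hh := congrArg Matrix.toBlocks₂₂ hv2
      rw [hGhat, ← fromBlocks_toBlocks v.inv, fromBlocks_multiply, ← fromBlocks_one] at hh
      simp only [Matrix.toBlocks_fromBlocks₂₂, Matrix.zero_mul, Matrix.mul_zero, zero_add,
        add_zero] at hh
      exact hh
    have hDunit : IsUnit Ghat.toBlocks₂₂ := ⟨⟨_, _, hD1, hD2⟩, rfl⟩
    obtain ⟨r', hr', hr'det⟩ := ih Ghat.toBlocks₂₂ hDunit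
    refine ⟨Quaternion.normSq d * r', mul_pos ?_ hr', ?_⟩
    · exact lt_of_le_of_ne (Quaternion.normSq_nonneg)
        (Ne.symm (by rwa [Ne, Quaternion.normSq_eq_zero]))
    · rw [_root_.map_mul, ← h3, hr'det, ← h2, ← h1, hGdet]

/-- The quaternion `j`. -/
def jH : Quaternion k := ⟨0, 0, 1, 0⟩

theorem mu_jH : mu k (jH (k := k)) = !![0, 1; -1, 0] := by
  ext r r'
  fin_cases r <;> fin_cases r' <;> simp [mu, jH]

theorem jH_mul_jH : jH (k := k) * jH (k := k) = -1 := by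
  ext <;> simp only [Quaternion.re_mul, Quaternion.imI_mul, Quaternion.imJ_mul, Quaternion.imK_mul] <;> simp [jH]

theorem Kbar.indep' {x y x' y' : k} (h : am x + am y * ρ = am x' + am y' * ρ) :
    x = x' ∧ y = y' := by
  have h0 : am (x - x') + am (y - y') * ρ = 0 := by
    rw [map_sub, map_sub]
    ring_nf
    linear_combination h
  obtain ⟨h1, h2⟩ := Kbar.indep k h0
  constructor <;> linarith [sub_eq_zero.mp h1, sub_eq_zero.mp h2]

theorem mu_inj {h h' : Quaternion k} (heq : mu k h = mu k h') : h = h' := by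
  have e00 : am h.re + am h.imI * ρ = am h'.re + am h'.imI * ρ := by
    have := congrFun (congrFun heq 0) 0
    simpa [mu] using this
  have e01 : am h.imJ + am h.imK * ρ = am h'.imJ + am h'.imK * ρ := by
    have := congrFun (congrFun heq 0) 1
    simpa [mu] using this
  obtain ⟨ha, hb⟩ := Kbar.indep' e00
  obtain ⟨hc, hd⟩ := Kbar.indep' e01
  exact QuaternionAlgebra.ext ha hb hc hd

theorem Phi_inj {ι : Type*} [Fintype ι] [DecidableEq ι]
    {N N' : Matrix ι ι (Quaternion k)} (h : Phi ι N = Phi ι N') : N = N' := by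
  refine Matrix.ext fun q q' => ?_
  apply mu_inj (k := k)
  ext r r'
  have := congrFun (congrFun h (q, r)) (q', r')
  simpa [Phi_apply] using this

theorem reindex_cancel {ι κ : Type*} {α : Type*} (e : ι ≃ κ) (X : Matrix ι ι α) :
    reindex e.symm e.symm (reindex e e X) = X := by
  ext a b; simp

theorem reindex_map {ι κ : Type*} {α β : Type*} (e : ι ≃ κ) (f : α → β) (X : Matrix ι ι α) :
    reindex e e (X.map f) = (reindex e e X).map f := by
  ext a b; simp

theorem mul_PhiDA {n : ℕ} (X : Matrix (Fin n × Fin 2) (Fin n × Fin 2) (Kbar k)) (a b) :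
    (X * Phi (Fin n) (Matrix.diagonal fun _ => jH (k := k))) a b
      = X a (b.1, 0) * (mu k (jH (k := k))) 0 b.2 + X a (b.1, 1) * (mu k (jH (k := k))) 1 b.2 := by
  rw [Matrix.mul_apply, Fintype.sum_prod_type, Finset.sum_eq_single b.1]
  · rw [Fin.sum_univ_two]
    simp [Phi_apply]
  · intro p _ hp
    apply Finset.sum_eq_zero
    intro s _
    simp [Phi_apply, Matrix.diagonal_apply_ne _ hp, mu_zero]
  · intro hmem; exact absurd (Finset.mem_univ _) hmem

theorem PhiDA_mul {n : ℕ} (Y : Matrix (Fin n × Fin 2) (Fin n × Fin 2) (Kbar k)) (a b) :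
    (Phi (Fin n) (Matrix.diagonal fun _ => jH (k := k)) * Y) a b
      = (mu k (jH (k := k))) a.2 0 * Y (a.1, 0) b + (mu k (jH (k := k))) a.2 1 * Y (a.1, 1) b := by
  rw [Matrix.mul_apply, Fintype.sum_prod_type, Finset.sum_eq_single a.1]
  · rw [Fin.sum_univ_two]
    simp [Phi_apply]
  · intro p _ hp
    apply Finset.sum_eq_zero
    intro s _
    simp [Phi_apply, Matrix.diagonal_apply_ne _ (Ne.symm hp), mu_zero]
  · intro hmem; exact absurd (Finset.mem_univ _) hmem

theorem exists_preimage {n : ℕ} (X : Matrix (Fin n × Fin 2) (Fin n × Fin 2) (Kbar k))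
    (hX : X * Phi (Fin n) (Matrix.diagonal fun _ => jH (k := k))
        = Phi (Fin n) (Matrix.diagonal fun _ => jH (k := k)) * X.map (Kbar.conj k)) :
    ∃ NQ : Matrix (Fin n) (Fin n) (Quaternion k), Phi (Fin n) NQ = X := by
  have key : ∀ q q' : Fin n, ∃ h : Quaternion k, ∀ r r', X (q, r) (q', r') = mu k h r r' := by
    intro q q'
    have hE : ∀ r r' : Fin 2,
        X (q, r) (q', 0) * (mu k (jH (k := k))) 0 r' + X (q, r) (q', 1) * (mu k (jH (k := k))) 1 r'
          = (mu k (jH (k := k))) r 0 * Kbar.conj k (X (q, 0) (q', r'))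
            + (mu k (jH (k := k))) r 1 * Kbar.conj k (X (q, 1) (q', r')) := by
      intro r r'
      have h0 : (X * Phi (Fin n) (Matrix.diagonal fun _ => jH (k := k))) (q, r) (q', r')
          = (Phi (Fin n) (Matrix.diagonal fun _ => jH (k := k)) * X.map (Kbar.conj k))
              (q, r) (q', r') := by rw [hX]
      rw [mul_PhiDA, PhiDA_mul] at h0
      simpa [Matrix.map_apply] using h0
    have e10 := hE 1 0
    have e11 := hE 1 1
    simp only [mu_jH, Matrix.cons_val', Matrix.cons_val_zero, Matrix.cons_val_one,
      Matrix.head_cons, Matrix.head_fin_const, Matrix.cons_val_fin_one, Matrix.of_apply,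
      mul_zero, mul_one, mul_neg_one, zero_add, add_zero, zero_mul, one_mul, neg_one_mul,
      neg_mul] at e10 e11
    obtain ⟨x, y, ha⟩ := Kbar.repr k (X (q, 0) (q', 0))
    obtain ⟨z, w, hb⟩ := Kbar.repr k (X (q, 0) (q', 1))
    refine ⟨⟨x, y, z, w⟩, ?_⟩
    have h11 : X (q, 1) (q', 1) = Kbar.conj k (X (q, 0) (q', 0)) := by
      have := e10
      linear_combination -this
    have h10 : X (q, 1) (q', 0) = -(Kbar.conj k (X (q, 0) (q', 1))) := by
      linear_combination e11
    have g00 : X (q, 0) (q', 0) = mu k ⟨x, y, z, w⟩ 0 0 := by rw [ha]; simp [mu]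
    have g01 : X (q, 0) (q', 1) = mu k ⟨x, y, z, w⟩ 0 1 := by rw [hb]; simp [mu]
    have g10 : X (q, 1) (q', 0) = mu k ⟨x, y, z, w⟩ 1 0 := by
      rw [h10, hb]
      simp only [map_add, _root_.map_mul, Kbar.conj_algebraMap, Kbar.conj_root]
      simp [mu]
      ring
    have g11 : X (q, 1) (q', 1) = mu k ⟨x, y, z, w⟩ 1 1 := by
      rw [h11, ha]
      simp only [map_add, _root_.map_mul, Kbar.conj_algebraMap, Kbar.conj_root]
      simp [mu]
      ring
    intro r r'
    fin_cases r <;> fin_cases r'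
    · simpa using g00
    · simpa using g01
    · simpa using g10
    · simpa using g11
  choose NQ hNQ using key
  refine ⟨NQ, ?_⟩
  refine Matrix.ext fun a b => ?_
  change mu k (NQ a.1 b.1) a.2 b.2 = _
  exact (hNQ a.1 b.1 a.2 b.2).symm

end

/-- if an invertible matrix `M` over `k̄` satisfies `M = A·conj(M)·A⁻¹`,
then `det M` is a positive element of `k`. -/
theorem det_pos_of_quaternionic_fixed (k : Type*) [Field k] [LinearOrder k] [IsStrictOrderedRing k]
    (hk : IsRealClosed' k) (n : ℕ) (M : Matrix (Fin (2 * n)) (Fin (2 * n)) (Kbar k))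
    (hM : IsUnit M.det)
    (hfix : M = An (Kbar k) (2 * n) * M.map (Kbar.conj k) * (An (Kbar k) (2 * n))⁻¹) :
    ∃ r : k, 0 < r ∧ algebraMap k (Kbar k) r = M.det := by

  classical
  let e2 : (Fin n × Fin 2) ≃ Fin (2 * n) := finProdFinEquiv.trans (finCongr (by ring))
  have he2v : ∀ p : Fin n × Fin 2, ((e2 p : Fin (2 * n)) : ℕ) = 2 * (p.1 : ℕ) + (p.2 : ℕ) := by
    intro p
    simp [e2, finProdFinEquiv]
    ring
  set DA : Matrix (Fin n) (Fin n) (Quaternion k) :=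
    Matrix.diagonal fun _ => jH (k := k) with hDA
  have key : ∀ (q q' : Fin n) (r r' : Fin 2),
      An (Kbar k) (2 * n) (e2 (q, r)) (e2 (q', r')) = mu k (DA q q') r r' := by
    intro q q' r r'
    by_cases hqq : q = q'
    · subst hqq
      have hdiag : DA q q = jH (k := k) := Matrix.diagonal_apply_eq _ q
      fin_cases r <;> fin_cases r' <;>
        · simp only [An, Matrix.of_apply, hdiag, mu_jH, he2v, Fin.val_zero, Fin.val_one,
            Fin.zero_eta, Fin.mk_one, Fin.isValue, Matrix.cons_val', Matrix.cons_val_zero,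
            Matrix.cons_val_one, Matrix.head_cons, Matrix.head_fin_const,
            Matrix.cons_val_fin_one, and_true, true_and, eq_self_iff_true]
          split_ifs with h1 h2 <;> first | rfl | (exfalso; omega) | simp | norm_num
    · have hq : (q : ℕ) ≠ (q' : ℕ) := fun hc => hqq (Fin.ext hc)
      have hd0 : DA q q' = 0 := Matrix.diagonal_apply_ne _ hqq
      fin_cases r <;> fin_cases r' <;>
        · simp only [An, Matrix.of_apply, hd0, mu_zero, Matrix.zero_apply, he2v, Fin.val_zero,
            Fin.val_one, Fin.zero_eta, Fin.mk_one, Fin.isValue, and_true, true_and, eq_self_iff_true]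
          split_ifs with h1 h2 <;> first | rfl | (exfalso; omega) | simp | norm_num
  have hAnr : reindex e2.symm e2.symm (An (Kbar k) (2 * n)) = Phi (Fin n) DA := by
    refine Matrix.ext fun a b => ?_
    obtain ⟨q, r⟩ := a
    obtain ⟨q', r'⟩ := b
    rw [reindex_apply, submatrix_apply, Equiv.symm_symm, key, Phi_apply]
  have hAn : An (Kbar k) (2 * n) = reindex e2 e2 (Phi (Fin n) DA) := by
    rw [← hAnr]
    refine Matrix.ext fun a b => ?_
    simp
  have hDAsq : DA * DA = -1 := by
    rw [hDA, Matrix.diagonal_mul_diagonal]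
    have : (fun i : Fin n => jH (k := k) * jH (k := k)) = fun _ : Fin n => (-1 : Quaternion k) := by
      funext i; exact jH_mul_jH
    have hd1 : (Matrix.diagonal fun _ : Fin n => (-1 : Quaternion k)) = -1 := by
      refine Matrix.ext fun i j => ?_
      by_cases h : i = j
      · subst h; simp
      · simp [Matrix.diagonal_apply_ne _ h, Matrix.one_apply_ne h]
    rw [this, hd1]
  have hre1 : reindex e2 e2 (-1 : Matrix (Fin n × Fin 2) (Fin n × Fin 2) (Kbar k)) = -1 := by
    refine Matrix.ext fun a b => ?_
    simp [Matrix.one_apply]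
  have hAA : An (Kbar k) (2 * n) * An (Kbar k) (2 * n) = -1 := by
    rw [hAn, reindex_mul, ← _root_.map_mul, hDAsq, map_neg, _root_.map_one, hre1]
  have hAinv : (An (Kbar k) (2 * n))⁻¹ = -(An (Kbar k) (2 * n)) :=
    Matrix.inv_eq_right_inv (by rw [Matrix.mul_neg, hAA, neg_neg])
  have hMA : M * An (Kbar k) (2 * n) = An (Kbar k) (2 * n) * M.map (Kbar.conj k) := by
    conv_lhs => rw [hfix]
    rw [hAinv, Matrix.mul_neg, Matrix.neg_mul, Matrix.mul_assoc, hAA, Matrix.mul_neg,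
      Matrix.mul_one, neg_neg]
  have descend : ∀ Y : Matrix (Fin (2 * n)) (Fin (2 * n)) (Kbar k),
      Y * An (Kbar k) (2 * n) = An (Kbar k) (2 * n) * Y.map (Kbar.conj k) →
      (reindex e2.symm e2.symm Y) * Phi (Fin n) DA
        = Phi (Fin n) DA * (reindex e2.symm e2.symm Y).map (Kbar.conj k) := by
    intro Y hY
    have h := congrArg (reindex e2.symm e2.symm) hY
    rw [← reindex_mul, ← reindex_mul, hAnr, reindex_map] at h
    exact h
  obtain ⟨N, hN⟩ := exists_preimage (reindex e2.symm e2.symm M) (descend M hMA)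
  have hMW : M * M⁻¹ = 1 := Matrix.mul_nonsing_inv _ hM
  have hWM : M⁻¹ * M = 1 := Matrix.nonsing_inv_mul _ hM
  have hmapMW : M.map (Kbar.conj k) * (M⁻¹).map (Kbar.conj k) = 1 := by
    rw [← Matrix.map_mul, hMW, Matrix.map_one _ (map_zero _) (_root_.map_one _)]
  have hWA : M⁻¹ * An (Kbar k) (2 * n)
      = An (Kbar k) (2 * n) * (M⁻¹).map (Kbar.conj k) := by
    have h1 : M⁻¹ * (M * An (Kbar k) (2 * n)) * ((M⁻¹).map (Kbar.conj k))
        = An (Kbar k) (2 * n) * ((M⁻¹).map (Kbar.conj k)) := by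
      rw [← Matrix.mul_assoc, hWM, Matrix.one_mul]
    have h2 : M⁻¹ * (An (Kbar k) (2 * n) * M.map (Kbar.conj k)) * ((M⁻¹).map (Kbar.conj k))
        = M⁻¹ * An (Kbar k) (2 * n) := by
      rw [Matrix.mul_assoc (M⁻¹), Matrix.mul_assoc (An (Kbar k) (2 * n)), hmapMW,
        Matrix.mul_one]
    rw [hMA, h2] at h1
    exact h1
  obtain ⟨N', hN'⟩ := exists_preimage (reindex e2.symm e2.symm M⁻¹) (descend M⁻¹ hWA)
  have hre1' : reindex e2.symm e2.symm (1 : Matrix (Fin (2 * n)) (Fin (2 * n)) (Kbar k)) = 1 := by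
    refine Matrix.ext fun a b => ?_
    simp [Matrix.one_apply]
  have hNN' : N * N' = 1 := by
    apply Phi_inj (ι := Fin n)
    rw [_root_.map_mul, hN, hN', _root_.map_one, reindex_mul, hMW, hre1']
  have hN'N : N' * N = 1 := by
    apply Phi_inj (ι := Fin n)
    rw [_root_.map_mul, hN, hN', _root_.map_one, reindex_mul, hWM, hre1']
  have hNunit : IsUnit N := ⟨⟨N, N', hNN', hN'N⟩, rfl⟩
  obtain ⟨r, hr, hrdet⟩ := det_Phi_pos n N hNunit
  refine ⟨r, hr, ?_⟩
  rw [hrdet, hN, reindex_apply, Matrix.det_submatrix_equiv_self]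
end

section
/- Let k be a real closed field with k̄ = k(i) and conj the nontrivial k-automorphism of k̄. A 2×2 matrix M over k̄ satisfies M = A₂·conj(M)·A₂⁻¹, where A₂ = [[0,1],[-1,0]], if and only if M is in the image of the standard embedding μ of the quaternion algebra H over k into M₂(k̄). -/
open Polynomial Matrix

/-- A (linearly ordered) field is real closed if every nonnegative element is a square and
every polynomial of odd degree has a root. -/
def IsRealClosedOld (k : Type*) [Field k] [LinearOrder k] [IsStrictOrderedRing k] : Prop :=
  (∀ x : k, 0 ≤ x → ∃ y, y ^ 2 = x) ∧
  ∀ p : Polynomial k, Odd p.natDegree → ∃ x, p.eval x = 0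

section aux
variable (k : Type*) [Field k] [LinearOrder k] [IsStrictOrderedRing k]

lemma monic_Xsq_add_one : (X ^ 2 + 1 : k[X]).Monic := by
  have := Polynomial.monic_X_pow_add (p := (1 : k[X])) (n := 2)
    (by simpa using Polynomial.degree_one_le)
  exact this

lemma Kbar.exists_decomp (z : AdjoinRoot (X ^ 2 + 1 : k[X])) :
    ∃ a b : k, z = algebraMap k _ a + algebraMap k _ b * AdjoinRoot.root _ := by
  obtain ⟨p, rfl⟩ := AdjoinRoot.mk_surjective z
  set q : k[X] := X ^ 2 + 1 with hq
  have hmonic : q.Monic := monic_Xsq_add_one k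
  set r := p %ₘ q with hr
  have hmk : AdjoinRoot.mk q p = AdjoinRoot.mk q r := by
    rw [AdjoinRoot.mk_eq_mk]
    refine ⟨p /ₘ q, ?_⟩
    have := Polynomial.modByMonic_eq_sub_mul_div p q
    rw [hr, this]; ring
  have hdeg : r.degree ≤ 1 := by
    have h2 : q.degree = 2 := by
      rw [hq]
      compute_degree!
    have := Polynomial.degree_modByMonic_lt p hmonic
    rw [h2] at this
    exact Order.le_of_lt_succ (by exact_mod_cast this)
  refine ⟨r.coeff 0, r.coeff 1, ?_⟩
  rw [hmk]
  conv_lhs => rw [Polynomial.eq_X_add_C_of_degree_le_one hdeg]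
  rw [map_add, _root_.map_mul, AdjoinRoot.mk_C, AdjoinRoot.mk_C, AdjoinRoot.mk_X,
    AdjoinRoot.algebraMap_eq]
  ring

lemma Kbar.conj_algebraMap_s5 (a : k) :
    Kbar.conj k (algebraMap k (Kbar k) a) = algebraMap k (Kbar k) a := by
  rw [AdjoinRoot.algebraMap_eq, ← AdjoinRoot.mk_C, Kbar.conj, AdjoinRoot.lift_mk, eval₂_C,
    AdjoinRoot.algebraMap_eq, AdjoinRoot.mk_C]

lemma Kbar.conj_root_s5 :
    Kbar.conj k (AdjoinRoot.root (X ^ 2 + 1 : k[X])) = -(AdjoinRoot.root _) :=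
  AdjoinRoot.lift_root _

lemma Kbar.conj_of (a : k) :
    Kbar.conj k (AdjoinRoot.of (X ^ 2 + 1 : k[X]) a) = AdjoinRoot.of (X ^ 2 + 1 : k[X]) a := by
  rw [← AdjoinRoot.algebraMap_eq]
  exact Kbar.conj_algebraMap_s5 k a

lemma An_two (R : Type*) [Ring R] : An R 2 = !![0, 1; -1, 0] := by
  ext i j
  fin_cases i <;> fin_cases j <;> simp [An]

lemma An_two_inv (R : Type*) [CommRing R] : (An R 2)⁻¹ = !![0, -1; 1, 0] := by
  rw [An_two]
  apply Matrix.inv_eq_right_inv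
  ext i j
  fin_cases i <;> fin_cases j <;> simp [Matrix.mul_apply, Fin.sum_univ_two]

end aux

/-- a 2×2 matrix `M` over `k̄` satisfies `M = A₂·conj(M)·A₂⁻¹`
iff `M` lies in the image of the standard quaternion embedding `μ`. -/
theorem quaternionic_fixed_iff_mem_mu_range (k : Type*) [Field k] [LinearOrder k] [IsStrictOrderedRing k]
    (hk : IsRealClosedOld k) (M : Matrix (Fin 2) (Fin 2) (Kbar k)) :
    M = An (Kbar k) 2 * M.map (Kbar.conj k) * (An (Kbar k) 2)⁻¹ ↔
      ∃ h : Quaternion k, M = mu k h := by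
  have key : ∀ i j, (An (Kbar k) 2 * M.map (Kbar.conj k) * (An (Kbar k) 2)⁻¹) i j =
      !![Kbar.conj k (M 1 1), -Kbar.conj k (M 1 0);
         -Kbar.conj k (M 0 1), Kbar.conj k (M 0 0)] i j := by
    intro i j
    rw [An_two_inv, An_two]
    fin_cases i <;> fin_cases j <;>
      simp [Matrix.mul_apply, Fin.sum_univ_two, Matrix.map_apply, Matrix.vecMul,
        dotProduct, Matrix.vecHead, Matrix.vecTail]
  have hc : M = An (Kbar k) 2 * M.map (Kbar.conj k) * (An (Kbar k) 2)⁻¹ ↔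
      (M 0 0 = Kbar.conj k (M 1 1) ∧ M 0 1 = -Kbar.conj k (M 1 0) ∧
       M 1 0 = -Kbar.conj k (M 0 1) ∧ M 1 1 = Kbar.conj k (M 0 0)) := by
    constructor
    · intro h
      refine ⟨?_, ?_, ?_, ?_⟩ <;>
        · conv_lhs => rw [h]
          rw [key]; simp
    · rintro ⟨h00, h01, h10, h11⟩
      ext i j
      rw [key]
      fin_cases i <;> fin_cases j
      · simpa using h00
      · simpa using h01
      · simpa using h10
      · simpa using h11
  rw [hc]
  constructor
  · rintro ⟨h00, h01, h10, h11⟩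
    obtain ⟨a, b, hab⟩ := Kbar.exists_decomp k (M 0 0)
    obtain ⟨c, d, hcd⟩ := Kbar.exists_decomp k (M 0 1)
    refine ⟨⟨a, b, c, d⟩, ?_⟩
    ext i j
    fin_cases i <;> fin_cases j <;> simp only [Fin.mk_zero, Fin.mk_one, Fin.isValue]
    · rw [hab]; simp [mu]
    · rw [hcd]; simp [mu]
    · rw [h10, hcd]
      simp [mu, map_add, _root_.map_mul, Kbar.conj_algebraMap_s5, Kbar.conj_root_s5, Kbar.conj_of]
      ring
    · rw [h11, hab]
      simp [mu, map_add, _root_.map_mul, Kbar.conj_algebraMap_s5, Kbar.conj_root_s5, Kbar.conj_of]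
      ring
  · rintro ⟨h, rfl⟩
    refine ⟨?_, ?_, ?_, ?_⟩ <;>
      · simp [mu, map_add, map_sub, _root_.map_mul, map_neg, Kbar.conj_algebraMap_s5,
          Kbar.conj_root_s5, Kbar.conj_of]
        try ring
end

section
/- Let k be a real closed field and H the quaternion division algebra over k with standard involution σ. Any two nondegenerate σ-anti-hermitian forms on Hⁿ (satisfying σ(H₀)ᵗ = -H₀) are equivalent; i.e., up to equivalence there is exactly one nondegenerate anti-hermitian form on Hⁿ. -/
open Polynomial Matrix

/-- A (linearly ordered) field is real closed if every nonnegative element is a square and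
every polynomial of odd degree has a root. -/
def IsRealClosedOrd (k : Type*) [Field k] [LinearOrder k] [IsStrictOrderedRing k] : Prop :=
  (∀ x : k, 0 ≤ x → ∃ y, y ^ 2 = x) ∧
  ∀ p : Polynomial k, Odd p.natDegree → ∃ x, p.eval x = 0

open scoped Quaternion

namespace S19
variable {k : Type*} [Field k] [LinearOrder k] [IsStrictOrderedRing k]

def qi : Quaternion k := ⟨0,1,0,0⟩
def qjq : Quaternion k := ⟨0,0,1,0⟩

@[simp] lemma qi_re : (qi : Quaternion k).re = 0 := rfl
@[simp] lemma qi_imI : (qi : Quaternion k).imI = 1 := rfl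
@[simp] lemma qi_imJ : (qi : Quaternion k).imJ = 0 := rfl
@[simp] lemma qi_imK : (qi : Quaternion k).imK = 0 := rfl
@[simp] lemma qjq_re : (qjq : Quaternion k).re = 0 := rfl
@[simp] lemma qjq_imI : (qjq : Quaternion k).imI = 0 := rfl
@[simp] lemma qjq_imJ : (qjq : Quaternion k).imJ = 1 := rfl
@[simp] lemma qjq_imK : (qjq : Quaternion k).imK = 0 := rfl

lemma qi_ne_zero : (qi : Quaternion k) ≠ 0 := fun h => by
  simpa [qi] using congrArg QuaternionAlgebra.imI h

lemma qj_ne_zero : (qjq : Quaternion k) ≠ 0 := fun h => by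
  simpa [qjq] using congrArg QuaternionAlgebra.imJ h

lemma star_qi : star (qi : Quaternion k) = -qi := by
  ext <;> simp

lemma pure_mul_self {p : Quaternion k} (h : p.re = 0) (h1 : Quaternion.normSq p = 1) :
    p * p = -1 := by
  rw [Quaternion.normSq_def'] at h1
  ext <;> simp [Quaternion.re_mul, Quaternion.imI_mul, Quaternion.imJ_mul,
    Quaternion.imK_mul, h] <;> nlinarith [h1]

lemma exists_u {p : Quaternion k} (h : p.re = 0) (h1 : Quaternion.normSq p = 1) :
    ∃ u : Quaternion k, u ≠ 0 ∧ u * p = qjq * u := by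
  by_cases hp : p = -qjq
  · refine ⟨qi, qi_ne_zero, ?_⟩
    subst hp
    ext <;> simp [Quaternion.re_mul, Quaternion.imI_mul, Quaternion.imJ_mul,
      Quaternion.imK_mul]
  · refine ⟨p + qjq, fun h0 => hp (eq_neg_of_add_eq_zero_left h0), ?_⟩
    have hjj : (qjq : Quaternion k) * qjq = -1 := by
      ext <;> simp [Quaternion.re_mul, Quaternion.imI_mul, Quaternion.imJ_mul,
        Quaternion.imK_mul]
    rw [add_mul, mul_add, pure_mul_self h h1, hjj, add_comm]

lemma sqrt_exists (hk : IsRealClosedOrd k) {x : k} (hx : 0 ≤ x) : ∃ y : k, 0 ≤ y ∧ y ^ 2 = x := by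
  obtain ⟨y, hy⟩ := hk.1 x hx
  exact ⟨|y|, abs_nonneg y, by rw [sq_abs, hy]⟩

lemma scalar_step (hk : IsRealClosedOrd k) {c : Quaternion k} (hre : c.re = 0) (hc : c ≠ 0) :
    ∃ m : Quaternion k, m ≠ 0 ∧ star m * c * m = qjq := by
  have hn : 0 < Quaternion.normSq c :=
    (Quaternion.normSq_nonneg).lt_of_ne' (Quaternion.normSq_ne_zero.2 hc)
  obtain ⟨s, hs0, hs2⟩ := sqrt_exists hk hn.le
  have hs : 0 < s := by nlinarith
  set p : Quaternion k := s⁻¹ • c with hpdef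
  have hpre : p.re = 0 := by simp [hpdef, hre]
  have hpn : Quaternion.normSq p = 1 := by
    rw [hpdef, Quaternion.normSq_smul, ← hs2]
    field_simp
  obtain ⟨u, hu0, hup⟩ := exists_u hpre hpn
  have hnu : 0 < Quaternion.normSq u :=
    (Quaternion.normSq_nonneg).lt_of_ne' (Quaternion.normSq_ne_zero.2 hu0)
  obtain ⟨t, ht0, ht2⟩ := sqrt_exists hk (show (0:k) ≤ (s * Quaternion.normSq u)⁻¹ by positivity)
  have htne : t ≠ 0 := by
    intro h
    rw [h, zero_pow two_ne_zero, eq_comm, inv_eq_zero] at ht2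
    exact (mul_pos hs hnu).ne' ht2
  have hc' : c = s • p := by rw [hpdef, smul_smul, mul_inv_cancel₀ hs.ne', one_smul]
  refine ⟨t • star u, ?_, ?_⟩
  · simp only [ne_eq, smul_eq_zero, not_or]
    exact ⟨htne, fun h => hu0 (by simpa using congrArg star h)⟩
  · calc star (t • star u) * c * (t • star u)
        = (t * t) • (u * c * star u) := by
          rw [Quaternion.star_smul, star_star, smul_mul_assoc, smul_mul_assoc,
            mul_smul_comm, smul_smul]
      _ = (t * t) • ((s * Quaternion.normSq u) • qjq) := by
          rw [hc', mul_smul_comm, smul_mul_assoc, hup, mul_assoc,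
            Quaternion.self_mul_star, Quaternion.mul_coe_eq_smul, smul_smul]
          simp [smul_smul, mul_assoc]
      _ = qjq := by
          rw [smul_smul, ← sq, ht2, inv_mul_cancel₀ (by positivity), one_smul]

end S19

section part2
variable {k : Type*} [Field k] [LinearOrder k] [IsStrictOrderedRing k]
open Matrix

namespace S19

abbrev QM (k : Type*) [Field k] [LinearOrder k] [IsStrictOrderedRing k] (n : ℕ) := Matrix (Fin n) (Fin n) (Quaternion k)

def MCong {n : ℕ} (A B : QM k n) : Prop := ∃ M, IsUnit M ∧ Mᴴ * A * M = B

lemma MCong.trans {n} {A B C : QM k n} : MCong A B → MCong B C → MCong A C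
  | ⟨M, hM, hM2⟩, ⟨N, hN, hN2⟩ => ⟨M * N, hM.mul hN, by
      rw [conjTranspose_mul, ← hN2, ← hM2]; simp only [Matrix.mul_assoc]⟩

lemma MCong.symm {n} {A B : QM k n} : MCong A B → MCong B A := fun ⟨M, hM, hM2⟩ => by
  obtain ⟨u, rfl⟩ := hM
  refine ⟨u⁻¹.val, u⁻¹.isUnit, ?_⟩
  rw [← hM2]
  calc (u⁻¹.val)ᴴ * ((u.val)ᴴ * A * u.val) * u⁻¹.val
      = (u.val * u⁻¹.val)ᴴ * A * (u.val * u⁻¹.val) := by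
        simp only [conjTranspose_mul, Matrix.mul_assoc]
    _ = A := by rw [u.mul_inv]; simp

lemma cong_skew {n} {M A : QM k n} (hA : Aᴴ = -A) : (Mᴴ * A * M)ᴴ = -(Mᴴ * A * M) := by
  rw [conjTranspose_mul, conjTranspose_mul, conjTranspose_conjTranspose, hA,
    Matrix.neg_mul, Matrix.mul_neg, Matrix.mul_assoc]

lemma cong_unit {n} {M A : QM k n} (hM : IsUnit M) (hA : IsUnit A) : IsUnit (Mᴴ * A * M) := by
  have : IsUnit Mᴴ := by rw [← Matrix.star_eq_conjTranspose]; exact hM.star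
  exact (this.mul hA).mul hM

lemma isUnit_one_add {n} (N : QM k n) (hN : N * N = 0) : IsUnit (1 + N) := by
  have h1 : (1 + N) * (1 - N) = 1 := by
    rw [Matrix.mul_sub, Matrix.mul_one, Matrix.add_mul, Matrix.one_mul, hN]
    abel
  have h2 : (1 - N) * (1 + N) = 1 := by
    rw [Matrix.mul_add, Matrix.mul_one, Matrix.sub_mul, Matrix.one_mul, hN]
    abel
  exact ⟨⟨1 + N, 1 - N, h1, h2⟩, rfl⟩

lemma conjT_stdBasis {n} (i j : Fin n) (c : Quaternion k) :
    (single i j c)ᴴ = single j i (star c) := by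
  refine Matrix.ext fun a b => ?_
  rw [conjTranspose_apply]
  by_cases h : j = a ∧ i = b
  · obtain ⟨rfl, rfl⟩ := h
    rw [single_apply_same, single_apply_same]
  · rw [single_apply_of_ne (h := h),
      single_apply_of_ne (h := fun hc => h ⟨hc.2, hc.1⟩), star_zero]

lemma step1 {n} (A : QM k (n+1)) (hA : Aᴴ = -A) (hu : IsUnit A) :
    ∃ E : QM k (n+1), IsUnit E ∧ (Eᴴ * A * E) 0 0 ≠ 0 := by
  by_cases h00 : A 0 0 ≠ 0
  · exact ⟨1, isUnit_one, by simpa using h00⟩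
  push_neg at h00
  have hex : ∃ i, A i 0 ≠ 0 := by
    by_contra hall
    push_neg at hall
    obtain ⟨u, hu'⟩ := hu
    have h1 : (u⁻¹.val * A) 0 0 = (1 : QM k (n+1)) 0 0 := by
      rw [← hu', u.inv_mul]
    rw [Matrix.mul_apply] at h1
    simp only [hall, mul_zero, Finset.sum_const_zero, Matrix.one_apply_eq] at h1
    exact zero_ne_one h1
  obtain ⟨i, hi⟩ := hex
  have hi0 : i ≠ 0 := fun h => hi (h ▸ h00)
  have hA0i : A 0 i = -star (A i 0) := by
    have h2 := congrFun (congrFun hA 0) i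
    rw [Matrix.conjTranspose_apply, Matrix.neg_apply] at h2
    rw [h2]; simp
  have gval : ∀ l : Quaternion k,
      (((1 + single i 0 l : QM k (n+1)))ᴴ * A * (1 + single i 0 l : QM k (n+1)))
        (0 : Fin (n+1)) (0 : Fin (n+1))
        = star l * A i 0 + A 0 i * l + star l * A i i * l := by
    intro l
    rw [conjTranspose_add, conjTranspose_one, conjT_stdBasis]
    rw [Matrix.add_mul, Matrix.one_mul, Matrix.add_mul, Matrix.mul_add, Matrix.mul_add]
    simp only [Matrix.mul_one, Matrix.add_apply]
    simp only [mul_single_apply_same, single_mul_apply_same]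
    rw [h00]
    noncomm_ring
  set l0 : Quaternion k := star (A i 0)⁻¹ * qi with hl0
  have hstarl0 : star l0 = -qi * (A i 0)⁻¹ := by
    rw [hl0, StarMul.star_mul, star_qi, star_star]
  have hterm1 : star l0 * A i 0 = -qi := by
    rw [hstarl0, mul_assoc, inv_mul_cancel₀ hi, mul_one]
  have hterm2 : A 0 i * l0 = -qi := by
    rw [hA0i, hl0, neg_mul, ← mul_assoc, ← StarMul.star_mul, inv_mul_cancel₀ hi, star_one,
      one_mul]
  by_cases hg : star l0 * A i 0 + A 0 i * l0 + star l0 * A i i * l0 = 0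
  · -- use (2:k) • l0
    have hPval : star l0 * A i i * l0 = qi + qi := by
      rw [hterm1, hterm2, ← neg_add] at hg
      exact (neg_add_eq_zero.mp hg).symm
    refine ⟨1 + single i (0 : Fin (n+1)) ((2:k) • l0), isUnit_one_add _ (by
      rw [single_mul_single_of_ne (h := Ne.symm hi0)]), ?_⟩
    rw [gval]
    simp only [Quaternion.star_smul]
    simp only [smul_mul_assoc, mul_smul_comm]
    rw [hterm1, hterm2, hPval]
    have hval : (2:k)•(-qi) + (2:k)•(-qi) + (2:k)•((2:k)•((qi:Quaternion k) + qi)) = (4:k)•qi := by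
      simp only [smul_add, smul_neg, smul_smul]
      module
    rw [hval]
    intro h
    rcases smul_eq_zero.mp h with h4 | h
    · norm_num at h4
    · exact qi_ne_zero h
  · exact ⟨1 + single i (0 : Fin (n+1)) l0, isUnit_one_add _ (by
      rw [single_mul_single_of_ne (h := Ne.symm hi0)]), by rw [gval]; exact hg⟩

end S19
end part2

section part3
variable {k : Type*} [Field k] [LinearOrder k] [IsStrictOrderedRing k]
open Matrix

namespace S19

lemma step2 {n} (A : QM k (n+1)) (hA : Aᴴ = -A) (h00 : A 0 0 ≠ 0) :
    ∃ N : QM k (n+1), IsUnit N ∧ (Nᴴ * A * N) 0 0 = A 0 0 ∧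
      (∀ q : Fin (n+1), q ≠ 0 → (Nᴴ * A * N) 0 q = 0) ∧
      (∀ q : Fin (n+1), q ≠ 0 → (Nᴴ * A * N) q 0 = 0) := by
  set W : QM k (n+1) :=
    Matrix.of (fun p q : Fin (n+1) => if p = 0 ∧ q ≠ 0 then -((A 0 0)⁻¹ * A 0 q) else 0)
    with hW
  have hWapp : ∀ p q : Fin (n+1), W p q = if p = 0 ∧ q ≠ 0 then -((A 0 0)⁻¹ * A 0 q) else 0 :=
    fun p q => rfl
  have hWcol : ∀ p : Fin (n+1), W p 0 = 0 := by
    intro p; rw [hWapp]; simp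
  have hWW : W * W = 0 := by
    refine Matrix.ext fun p q => ?_
    rw [Matrix.mul_apply, Matrix.zero_apply]
    refine Finset.sum_eq_zero fun t _ => ?_
    rcases eq_or_ne t 0 with rfl | ht
    · rw [hWcol, zero_mul]
    · have h : W t q = 0 := by rw [hWapp]; simp [ht]
      rw [h, mul_zero]
  have hAW : ∀ q : Fin (n+1), (A * W) 0 q = A 0 0 * W 0 q := by
    intro q
    rw [Matrix.mul_apply]
    refine Finset.sum_eq_single_of_mem 0 (Finset.mem_univ _) fun t _ ht => ?_
    have h : W t q = 0 := by rw [hWapp]; simp [ht]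
    rw [h, mul_zero]
  have hAN : ∀ q : Fin (n+1), (A * (1 + W)) 0 q = if q = 0 then A 0 0 else 0 := by
    intro q
    rw [Matrix.mul_add, Matrix.mul_one, Matrix.add_apply, hAW]
    rcases eq_or_ne q 0 with rfl | hq
    · rw [hWcol, mul_zero, add_zero, if_pos rfl]
    · rw [if_neg hq, hWapp, if_pos ⟨rfl, hq⟩, mul_neg, mul_inv_cancel_left₀ h00, add_neg_cancel]
  have hNT : ∀ (X : QM k (n+1)) (q : Fin (n+1)), (((1 + W : QM k (n+1)))ᴴ * X) 0 q = X 0 q := by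
    intro X q
    rw [conjTranspose_add, conjTranspose_one, Matrix.add_mul, Matrix.one_mul, Matrix.add_apply,
      Matrix.mul_apply]
    have h : ∀ t : Fin (n+1), Wᴴ 0 t * X t q = 0 := fun t => by
      rw [conjTranspose_apply, hWcol, star_zero, zero_mul]
    rw [Finset.sum_congr rfl fun t _ => h t]
    simp
  have hrow : ∀ q : Fin (n+1), (((1 + W : QM k (n+1)))ᴴ * A * (1 + W)) 0 q = if q = 0 then A 0 0 else 0 := by
    intro q
    rw [Matrix.mul_assoc, hNT, hAN]
  refine ⟨1 + W, isUnit_one_add W hWW, ?_, ?_, ?_⟩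
  · rw [hrow, if_pos rfl]
  · intro q hq; rw [hrow, if_neg hq]
  · intro q hq
    have hsk := cong_skew (M := 1 + W) hA
    have h2 := congrFun (congrFun hsk 0) q
    rw [Matrix.conjTranspose_apply, Matrix.neg_apply, hrow, if_neg hq, neg_zero] at h2
    exact star_eq_zero.mp h2

end S19
end part3

section part4
variable {k : Type*} [Field k] [LinearOrder k] [IsStrictOrderedRing k]
open Matrix

namespace S19

def finE (n : ℕ) : Fin 1 ⊕ Fin n ≃ Fin (n+1) where
  toFun := Sum.elim (fun _ => 0) Fin.succ
  invFun := Fin.cases (Sum.inl 0) Sum.inr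
  left_inv := by
    rintro (x | x)
    · rw [Fin.fin_one_eq_zero x]; simp
    · simp
  right_inv := by
    intro p
    induction p using Fin.cases <;> simp

lemma isUnit_submatrix_equiv {m m' : Type*} [Fintype m] [DecidableEq m] [Fintype m']
    [DecidableEq m'] (e : m' ≃ m) {A : Matrix m m (Quaternion k)} (h : IsUnit A) :
    IsUnit (A.submatrix e e) := by
  obtain ⟨u, rfl⟩ := h
  refine ⟨⟨u.val.submatrix e e, u⁻¹.val.submatrix e e, ?_, ?_⟩, rfl⟩
  · rw [submatrix_mul_equiv, u.mul_inv, submatrix_one_equiv]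
  · rw [submatrix_mul_equiv, u.inv_mul, submatrix_one_equiv]

lemma main (hk : IsRealClosedOrd k) : ∀ n (A : QM k n), Aᴴ = -A → IsUnit A →
    MCong A ((qjq : Quaternion k) • (1 : QM k n)) := by
  intro n
  induction n with
  | zero =>
    intro A _ _
    exact ⟨1, isUnit_one, Matrix.ext fun i _ => i.elim0⟩
  | succ n ih =>
    intro A hA hu
    obtain ⟨E, hE, hE0⟩ := step1 A hA hu
    obtain ⟨N, hN, hN00, hNrow, hNcol⟩ := step2 (Eᴴ * A * E) (cong_skew hA) hE0
    set A2 : QM k (n+1) := Nᴴ * (Eᴴ * A * E) * N with hA2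
    have hA2skew : A2ᴴ = -A2 := cong_skew (cong_skew hA)
    have hA2u : IsUnit A2 := cong_unit hN (cong_unit hE hu)
    have hcongA2 : MCong A A2 := MCong.trans ⟨E, hE, rfl⟩ ⟨N, hN, rfl⟩
    set c : Quaternion k := A2 0 0 with hc
    have hcne : c ≠ 0 := by rw [hN00]; exact hE0
    have hcre : c.re = 0 := by
      have h2 := congrFun (congrFun hA2skew 0) 0
      rw [Matrix.conjTranspose_apply, Matrix.neg_apply] at h2
      exact QuaternionAlgebra.star_eq_neg.mp h2
    obtain ⟨m, hm0, hmc⟩ := scalar_step hk hcre hcne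
    set B : QM k n := A2.submatrix Fin.succ Fin.succ with hB
    have hblock : A2.submatrix (finE n) (finE n) =
        fromBlocks (Matrix.of fun (_ _ : Fin 1) => c) 0 0 B := by
      refine Matrix.ext fun p q => ?_
      rcases p with p | p <;> rcases q with q | q
      · simp [finE, fromBlocks, submatrix_apply, hc]
      · simpa [finE, fromBlocks, submatrix_apply] using hNrow q.succ (Fin.succ_ne_zero q)
      · simpa [finE, fromBlocks, submatrix_apply] using hNcol p.succ (Fin.succ_ne_zero p)
      · simp [finE, fromBlocks, submatrix_apply, hB]
    have hBskew : Bᴴ = -B := by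
      refine Matrix.ext fun p q => ?_
      have h2 := congrFun (congrFun hA2skew p.succ) q.succ
      rw [Matrix.conjTranspose_apply, Matrix.neg_apply] at h2
      simp only [conjTranspose_apply, Matrix.neg_apply, hB, submatrix_apply]
      exact h2
    have hblocku : IsUnit (fromBlocks (Matrix.of fun (_ _ : Fin 1) => c) 0 0 B) := by
      rw [← hblock]; exact isUnit_submatrix_equiv (finE n) hA2u
    have hBu : IsUnit B := by
      obtain ⟨u, hu2⟩ := hblocku
      have h1 : fromBlocks (Matrix.of fun (_ _ : Fin 1) => c) 0 0 B * u⁻¹.val = 1 := by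
        rw [← hu2]; exact u.mul_inv
      have h2 : u⁻¹.val * fromBlocks (Matrix.of fun (_ _ : Fin 1) => c) 0 0 B = 1 := by
        rw [← hu2]; exact u.inv_mul
      rw [← fromBlocks_toBlocks u⁻¹.val, fromBlocks_multiply, ← fromBlocks_one] at h1 h2
      have e1 := congrArg Matrix.toBlocks₂₂ h1
      have e2 := congrArg Matrix.toBlocks₂₂ h2
      rw [toBlocks_fromBlocks₂₂, toBlocks_fromBlocks₂₂] at e1 e2
      simp only [Matrix.zero_mul, Matrix.mul_zero, zero_add, add_zero] at e1 e2
      exact ⟨⟨B, _, e1, e2⟩, rfl⟩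
    obtain ⟨P, hP, hPB⟩ := ih B hBskew hBu
    -- 1x1 helpers
    have h1x1mul : ∀ x y : Quaternion k,
        (Matrix.of fun (_ _ : Fin 1) => x) * (Matrix.of fun (_ _ : Fin 1) => y)
          = Matrix.of fun (_ _ : Fin 1) => x * y := by
      intro x y
      refine Matrix.ext fun p q => ?_
      rw [Matrix.mul_apply]
      simp
    have h1x1ct : ∀ x : Quaternion k,
        (Matrix.of fun (_ _ : Fin 1) => x)ᴴ = Matrix.of fun (_ _ : Fin 1) => star x := by
      intro x
      refine Matrix.ext fun p q => ?_
      rw [conjTranspose_apply]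
      simp
    have h1x1smul : (Matrix.of fun (_ _ : Fin 1) => (qjq : Quaternion k))
        = (qjq : Quaternion k) • (1 : QM k 1) := by
      refine Matrix.ext fun p q => ?_
      rw [Fin.fin_one_eq_zero p, Fin.fin_one_eq_zero q]
      simp [Matrix.smul_apply, Matrix.one_apply]
    have h1x1one : (Matrix.of fun (_ _ : Fin 1) => (1 : Quaternion k)) = (1 : QM k 1) := by
      refine Matrix.ext fun p q => ?_
      rw [Fin.fin_one_eq_zero p, Fin.fin_one_eq_zero q]
      simp [Matrix.one_apply]
    set Mb : Matrix (Fin 1 ⊕ Fin n) (Fin 1 ⊕ Fin n) (Quaternion k) :=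
      fromBlocks (Matrix.of fun (_ _ : Fin 1) => m) 0 0 P with hMb
    have hMbu : IsUnit Mb := by
      obtain ⟨uP, hup⟩ := hP
      refine ⟨⟨Mb, fromBlocks (Matrix.of fun (_ _ : Fin 1) => m⁻¹) 0 0
        uP⁻¹.val, ?_, ?_⟩, rfl⟩
      · rw [hMb, fromBlocks_multiply]
        simp only [Matrix.zero_mul, Matrix.mul_zero, add_zero, zero_add]
        rw [h1x1mul, mul_inv_cancel₀ hm0, h1x1one, ← hup, uP.mul_inv, fromBlocks_one]
      · rw [hMb, fromBlocks_multiply]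
        simp only [Matrix.zero_mul, Matrix.mul_zero, add_zero, zero_add]
        rw [h1x1mul, inv_mul_cancel₀ hm0, h1x1one, ← hup, uP.inv_mul, fromBlocks_one]
    have hA2eq : A2 = (fromBlocks (Matrix.of fun (_ _ : Fin 1) => c) 0 0 B).submatrix
        (finE n).symm (finE n).symm := by
      rw [← hblock]
      refine Matrix.ext fun p q => ?_
      rw [submatrix_apply, submatrix_apply, Equiv.apply_symm_apply, Equiv.apply_symm_apply]
    have hfb1 : fromBlocks ((qjq : Quaternion k) • (1 : QM k 1)) 0 0
        ((qjq : Quaternion k) • (1 : QM k n))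
        = (qjq : Quaternion k) • (1 : Matrix (Fin 1 ⊕ Fin n) (Fin 1 ⊕ Fin n) (Quaternion k)) := by
      rw [← fromBlocks_one, fromBlocks_smul]
      simp
    have hMcong2 : MCong A2 ((qjq : Quaternion k) • (1 : QM k (n+1))) := by
      refine ⟨Mb.submatrix (finE n).symm (finE n).symm,
        isUnit_submatrix_equiv (finE n).symm hMbu, ?_⟩
      rw [hA2eq, conjTranspose_submatrix, submatrix_mul_equiv, submatrix_mul_equiv]
      rw [hMb, fromBlocks_conjTranspose]
      simp only [conjTranspose_zero]
      rw [fromBlocks_multiply, fromBlocks_multiply]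
      simp only [Matrix.zero_mul, Matrix.mul_zero, add_zero, zero_add]
      rw [h1x1ct, h1x1mul, h1x1mul, hmc, hPB, h1x1smul, hfb1]
      refine Matrix.ext fun p q => ?_
      simp [Matrix.one_apply, EmbeddingLike.apply_eq_iff_eq]
    exact hcongA2.trans hMcong2

end S19
end part4

/-- any two nondegenerate σ-anti-hermitian forms on `Hⁿ` are equivalent
(σ the standard quaternion involution, i.e. `star`). -/
theorem quaternion_antihermitian_unique (k : Type*) [Field k] [LinearOrder k] [IsStrictOrderedRing k]
    (hk : IsRealClosedOrd k) (n : ℕ)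
    (H₀ H₁ : Matrix (Fin n) (Fin n) (Quaternion k))
    (h₀ : (H₀.map star)ᵀ = -H₀) (h₁ : (H₁.map star)ᵀ = -H₁)
    (hu₀ : IsUnit H₀) (hu₁ : IsUnit H₁) :
    ∃ M : Matrix (Fin n) (Fin n) (Quaternion k),
      IsUnit M ∧ (M.map star)ᵀ * H₀ * M = H₁ := by
  have c0 := S19.main hk n H₀ h₀ hu₀
  have c1 := S19.main hk n H₁ h₁ hu₁
  obtain ⟨M, hM, hMeq⟩ := c0.trans c1.symm
  exact ⟨M, hM, hMeq⟩
end
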